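/- (No information without perturbation) Let T_x : M_n(ℂ) → M_n(ℂ), x ∈ X (X finite), be completely positive maps whose sum satisfies Σ_x T_x(A) = U* A U for all A, with U unitary. Then there exist nonnegative numbers p_x with Σ_x p_x = 1 such that T_x(A) = p_x · U* A U for all A and x. In particular, for any density matrix ρ, the probability tr(ρ T_x(I)) = p_x is independent of ρ. -/

import Mathlib

open Finset Matrix ComplexOrder

private lemma psd_sum' {m ι : Type*} [Fintype m] {s : Finset ι}
    {C : ι → Matrix m m ℂ} (h : ∀ i ∈ s, (C i).PosSemidef) :
    (∑ i ∈ s, C i).PosSemidef := by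
  classical
  induction s using Finset.induction_on with
  | empty => simpa using Matrix.PosSemidef.zero
  | @insert a t ha ih =>
    rw [Finset.sum_insert ha]
    exact (h a (Finset.mem_insert_self a t)).add
      (ih fun i hi => h i (Finset.mem_insert_of_mem hi))

private lemma aux_rank_one {m : Type*} [Fintype m] [DecidableEq m] {w : m → ℂ}
    {C D : Matrix m m ℂ} (hC : C.PosSemidef) (hD : D.PosSemidef)
    (hN : star w ⬝ᵥ w ≠ 0)
    (hsum : C + D = Matrix.of fun p q => w p * star (w q)) :
    ∃ c : ℂ, 0 ≤ c ∧ ∀ p q, C p q = c * (w p * star (w q)) := by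
  set N := star w ⬝ᵥ w with hNdef
  have hN0 : 0 ≤ N := by
    rw [hNdef]
    exact Finset.sum_nonneg fun q _ => star_mul_self_nonneg (w q)
  have hNstar : star N = N := by
    have := Complex.eq_re_of_ofReal_le (r := 0) (by simpa using hN0)
    rw [this]; exact Complex.conj_ofReal _
  have key : ∀ y, star w ⬝ᵥ y = 0 → C *ᵥ y = 0 := by
    intro y hy
    have hmv : (Matrix.of fun p q => w p * star (w q)) *ᵥ y = (star w ⬝ᵥ y) • w := by
      ext p
      simp only [Matrix.mulVec, dotProduct, Matrix.of_apply, Pi.smul_apply, smul_eq_mul,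
        Finset.sum_mul, Pi.star_apply]
      exact Finset.sum_congr rfl fun q _ => by ring
    have htot : star y ⬝ᵥ C *ᵥ y + star y ⬝ᵥ D *ᵥ y = 0 := by
      have h1 : star y ⬝ᵥ (C + D) *ᵥ y = 0 := by
        rw [hsum, hmv, hy, zero_smul, dotProduct_zero]
      simpa [Matrix.add_mulVec, dotProduct_add] using h1
    have h0 : star y ⬝ᵥ C *ᵥ y = 0 :=
      ((add_eq_zero_iff_of_nonneg (hC.dotProduct_mulVec_nonneg y) (hD.dotProduct_mulVec_nonneg y)).mp htot).1
    exact (hC.dotProduct_mulVec_zero_iff y).mp h0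
  have colkey : ∀ y, C *ᵥ y = ((star w ⬝ᵥ y) / N) • (C *ᵥ w) := by
    intro y
    have h1 : star w ⬝ᵥ (y - ((star w ⬝ᵥ y) / N) • w) = 0 := by
      rw [dotProduct_sub, dotProduct_smul, smul_eq_mul, ← hNdef, div_mul_cancel₀ _ hN, sub_self]
    have h2 := key _ h1
    rw [Matrix.mulVec_sub, Matrix.mulVec_smul, sub_eq_zero] at h2
    exact h2
  set f := C *ᵥ w with hf
  have entry : ∀ p q, C p q = (star (w q) / N) * f p := by
    intro p q
    have h := congrFun (colkey (Pi.single q 1)) p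
    simpa [Matrix.mulVec_single, dotProduct_single, Pi.star_apply] using h
  set s := star w ⬝ᵥ f with hs
  have hs0 : 0 ≤ s := hC.dotProduct_mulVec_nonneg w
  have hsstar : star s = s := by
    have := Complex.eq_re_of_ofReal_le (r := 0) (by simpa using hs0)
    rw [this]; exact Complex.conj_ofReal _
  have hpq : ∀ p q, star (w q) * f p = w p * star (f q) := by
    intro p q
    have h2 : C p q = w p / N * star (f q) := by
      rw [← hC.1.apply p q, entry q p, star_mul', star_div₀, star_star, hNstar]
    have e := (entry p q).symm.trans h2
    rw [div_mul_eq_mul_div, div_mul_eq_mul_div, div_eq_div_iff hN hN] at e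
    exact mul_right_cancel₀ hN e
  have fprop : ∀ p, f p = s / N * w p := by
    intro p
    have h4 : N * f p = w p * s :=
      calc N * f p = ∑ q, w q * (star (w q) * f p) := by
            rw [hNdef, dotProduct, Finset.sum_mul]
            exact Finset.sum_congr rfl fun q _ => by simp only [Pi.star_apply]; ring
        _ = ∑ q, w q * (w p * star (f q)) :=
            Finset.sum_congr rfl fun q _ => by rw [hpq p q]
        _ = w p * star s := by
            rw [hs, dotProduct, star_sum, Finset.mul_sum]
            exact Finset.sum_congr rfl fun q _ => by
              simp only [Pi.star_apply, star_mul', star_star]; ring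
        _ = w p * s := by rw [hsstar]
    rw [div_mul_eq_mul_div, eq_div_iff hN]
    linear_combination h4
  refine ⟨s / (N * N), ?_, ?_⟩
  · have hNre : N = (N.re : ℂ) := Complex.eq_re_of_ofReal_le (r := 0) (by simpa using hN0)
    have hsre : s = (s.re : ℂ) := Complex.eq_re_of_ofReal_le (r := 0) (by simpa using hs0)
    have h1 : s / (N * N) = ((s.re / (N.re * N.re) : ℝ) : ℂ) := by
      rw [Complex.ofReal_div, Complex.ofReal_mul, ← hNre, ← hsre]
    rw [h1, Complex.zero_le_real]
    exact div_nonneg (Complex.nonneg_iff.mp hs0).1 (mul_self_nonneg _)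
  · intro p q
    rw [entry p q, fprop p]
    field_simp


/-- No information without perturbation: if completely positive maps T_x sum to a
    unitarily implemented channel A ↦ U*AU, then each T_x = p_x · (U* · U) for a
    probability distribution p, and the outcome probabilities tr(ρ T_x(1)) = p_x are
    independent of the input state ρ. -/
theorem stmt9 {X : Type*} [Fintype X] {n : ℕ} (hn : 0 < n)
    (T : X → Matrix (Fin n) (Fin n) ℂ →ₗ[ℂ] Matrix (Fin n) (Fin n) ℂ)
    (hcp : ∀ x (k : ℕ) (M : Matrix (Fin n × Fin k) (Fin n × Fin k) ℂ), M.PosSemidef →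
      (Matrix.of fun p q : Fin n × Fin k =>
        T x (Matrix.of fun i j => M (i, p.2) (j, q.2)) p.1 q.1).PosSemidef)
    (U : Matrix (Fin n) (Fin n) ℂ) (hU : U ∈ Matrix.unitaryGroup (Fin n) ℂ)
    (hsum : ∀ A, ∑ x, T x A = Uᴴ * A * U) :
    ∃ p : X → ℝ, (∀ x, 0 ≤ p x) ∧ (∑ x, p x = 1) ∧
      (∀ x A, T x A = (p x : ℂ) • (Uᴴ * A * U)) ∧
      (∀ x (ρ : Matrix (Fin n) (Fin n) ℂ), ρ.PosSemidef → ρ.trace = 1 →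
        (ρ * T x 1).trace = (p x : ℂ)) := by
  classical
  have hUU : Uᴴ * U = 1 := by
    have := hU.1
    rwa [Matrix.star_eq_conjTranspose] at this
  have hUUc : U * Uᴴ = 1 := by
    have := hU.2
    rwa [Matrix.star_eq_conjTranspose] at this
  -- entangled vector and state
  set v : Fin n × Fin n → ℂ := fun p => if p.1 = p.2 then 1 else 0 with hv
  set M : Matrix (Fin n × Fin n) (Fin n × Fin n) ℂ := Matrix.of fun p q => v p * star (v q)
    with hM
  have hMpsd : M.PosSemidef := by
    rw [Matrix.posSemidef_iff_dotProduct_mulVec]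
    constructor
    · ext p q
      simp only [hM, Matrix.conjTranspose_apply, Matrix.of_apply, star_mul', star_star]
      ring
    · intro y
      have hmv : M *ᵥ y = (star v ⬝ᵥ y) • v := by
        ext p
        simp only [hM, Matrix.mulVec, dotProduct, Matrix.of_apply, Pi.smul_apply, smul_eq_mul,
          Finset.sum_mul, Pi.star_apply]
        exact Finset.sum_congr rfl fun q _ => by ring
      rw [hmv, dotProduct_smul, smul_eq_mul]
      have : star y ⬝ᵥ v = star (star v ⬝ᵥ y) := by
        simp only [dotProduct, star_sum, star_mul', star_star, Pi.star_apply]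
        exact Finset.sum_congr rfl fun q _ => by ring
      rw [this, mul_comm]
      exact star_mul_self_nonneg _
  -- the inner slice matrices are standard basis matrices
  have hslice : ∀ a b : Fin n,
      (Matrix.of fun i j : Fin n => M (i, a) (j, b)) = Matrix.single a b 1 := by
    intro a b
    ext i j
    simp only [hM, Matrix.of_apply, hv, Matrix.single]
    by_cases h1 : i = a <;> by_cases h2 : j = b
    · simp [h1, h2]
    · simp [h1, h2, show ¬b = j from fun h => h2 h.symm]
    · simp [h1, h2, show ¬a = i from fun h => h1 h.symm]
    · simp [h1, h2, show ¬a = i from fun h => h1 h.symm]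
  -- Choi matrices
  set C : X → Matrix (Fin n × Fin n) (Fin n × Fin n) ℂ := fun x =>
    Matrix.of fun p q => T x (Matrix.of fun i j => M (i, p.2) (j, q.2)) p.1 q.1 with hC
  have hCpsd : ∀ x, (C x).PosSemidef := fun x => hcp x n M hMpsd
  -- the vector w
  set w : Fin n × Fin n → ℂ := fun p => star (U p.2 p.1) with hw
  have hCval : ∀ x (p q : Fin n × Fin n),
      C x p q = T x (Matrix.single p.2 q.2 1) p.1 q.1 := by
    intro x p q
    simp only [hC, Matrix.of_apply, hslice]
  have hUEU : ∀ (a b i j : Fin n),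
      (Uᴴ * Matrix.single a b (1:ℂ) * U) i j = star (U a i) * U b j := by
    intro a b i j
    rw [Matrix.mul_apply]
    simp only [Matrix.mul_apply, Matrix.single, Matrix.conjTranspose_apply,
      Matrix.of_apply, mul_ite, mul_one, mul_zero, ite_mul, zero_mul]
    simp [ite_and, Finset.sum_ite_eq, ite_mul, zero_mul]
  have hCsum : ∑ x, C x = Matrix.of fun p q => w p * star (w q) := by
    ext p q
    rw [Matrix.sum_apply]
    calc ∑ x, C x p q = (∑ x, T x (Matrix.single p.2 q.2 (1:ℂ))) p.1 q.1 := by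
          simp only [hCval]
          rw [Matrix.sum_apply]
      _ = (Uᴴ * Matrix.single p.2 q.2 (1:ℂ) * U) p.1 q.1 := by rw [hsum]
      _ = star (U p.2 p.1) * U q.2 q.1 := hUEU _ _ _ _
      _ = w p * star (w q) := by simp [hw, star_star]
  have hNval : star w ⬝ᵥ w = (n : ℂ) := by
    have h1 : star w ⬝ᵥ w = ∑ p : Fin n × Fin n, U p.2 p.1 * star (U p.2 p.1) := by
      simp only [dotProduct, Pi.star_apply, hw, star_star]
    rw [h1, Fintype.sum_prod_type, Finset.sum_comm]
    simp only [Complex.star_def]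
    have h2 : ∀ a : Fin n, ∑ i, U a i * (starRingEnd ℂ) (U a i) = 1 := by
      intro a
      have h3 := congrFun (congrFun hUUc a) a
      simpa [Matrix.mul_apply, Matrix.one_apply, Matrix.conjTranspose_apply,
        Complex.star_def] using h3
    rw [Finset.sum_congr rfl fun a _ => h2 a]
    simp
  have hNne : star w ⬝ᵥ w ≠ 0 := by
    rw [hNval]
    exact_mod_cast Nat.cast_ne_zero.mpr hn.ne'
  have hsplit : ∀ x, C x + (∑ y ∈ Finset.univ.erase x, C y)
      = Matrix.of fun p q => w p * star (w q) := by
    intro x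
    rw [Finset.add_sum_erase _ _ (Finset.mem_univ x)]
    exact hCsum
  have hcx : ∀ x, ∃ c : ℂ, 0 ≤ c ∧ ∀ p q, C x p q = c * (w p * star (w q)) := fun x =>
    aux_rank_one (hCpsd x) (psd_sum' fun y _ => hCpsd y) hNne (hsplit x)
  choose c hc0 hcform using hcx
  have hpc : ∀ x, ((c x).re : ℂ) = c x := fun x =>
    (Complex.eq_re_of_ofReal_le (r := 0) (by simpa using hc0 x)).symm
  -- the maps are multiples of the channel
  have hTx : ∀ x A, T x A = c x • (Uᴴ * A * U) := by
    intro x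
    have hbasis : ∀ a b, T x (Matrix.single a b (1:ℂ))
        = c x • (Uᴴ * Matrix.single a b (1:ℂ) * U) := by
      intro a b
      ext i j
      have h1 : T x (Matrix.single a b (1:ℂ)) i j = C x (i, a) (j, b) :=
        (hCval x (i, a) (j, b)).symm
      rw [h1, hcform x (i, a) (j, b), Matrix.smul_apply, hUEU, smul_eq_mul]
      simp [hw, star_star]
    have hL : T x = {
        toFun := fun A => c x • (Uᴴ * A * U),
        map_add' := fun A B => by
          show c x • (Uᴴ * (A + B) * U) = c x • (Uᴴ * A * U) + c x • (Uᴴ * B * U)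
          rw [Matrix.mul_add, Matrix.add_mul, smul_add],
        map_smul' := fun r A => by
          show c x • (Uᴴ * (r • A) * U) = r • (c x • (Uᴴ * A * U))
          rw [Matrix.mul_smul, Matrix.smul_mul, smul_comm] } := by
      apply Module.Basis.ext (Matrix.stdBasis ℂ (Fin n) (Fin n))
      rintro ⟨a, b⟩
      rw [Matrix.stdBasis_eq_single]
      exact hbasis a b
    intro A
    rw [hL]
    rfl
  -- sum of coefficients is 1
  obtain ⟨p₀, hp₀⟩ : ∃ p₀ : Fin n × Fin n, w p₀ ≠ 0 := by
    by_contra h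
    push_neg at h
    have : star w ⬝ᵥ w = 0 := by simp [dotProduct, h]
    exact hNne this
  have hcsum1 : ∑ x, c x = 1 := by
    have ht : w p₀ * star (w p₀) ≠ 0 := mul_ne_zero hp₀ (star_ne_zero.mpr hp₀)
    have h2 := congrFun (congrFun hCsum p₀) p₀
    rw [Matrix.sum_apply] at h2
    have h1 : (∑ x, c x) * (w p₀ * star (w p₀)) = 1 * (w p₀ * star (w p₀)) := by
      rw [one_mul, Finset.sum_mul]
      exact (Finset.sum_congr rfl fun x _ => (hcform x p₀ p₀).symm).trans h2
    exact mul_right_cancel₀ ht h1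
  refine ⟨fun x => (c x).re, fun x => (Complex.nonneg_iff.mp (hc0 x)).1, ?_, ?_, ?_⟩
  · have : ((∑ x, (c x).re : ℝ) : ℂ) = 1 := by
      push_cast
      rw [Finset.sum_congr rfl fun x _ => hpc x]
      exact hcsum1
    exact_mod_cast this
  · intro x A
    rw [hTx x A, hpc x]
  · intro x ρ hρ hρtr
    rw [hTx x 1, Matrix.mul_one, hUU, Matrix.mul_smul, Matrix.mul_one, Matrix.trace_smul,
      hρtr, smul_eq_mul, mul_one]
    exact (hpc x).symm
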